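/- Let A₁, …, A_n ⊆ [n] and p ∈ [0,1]. Assume Spencer's theorem: for every family of n subsets of an n-element ground set and every restriction to a subset X of the ground set, there is a ±1-colouring χ of X with |χ(A_i ∩ X)| ≤ 6√n for all i. Then there exists Y ⊆ [n] such that for every i, ||A_i ∩ Y| − p·|A_i|| ≤ 6√n. -/

import Mathlib

open Finset

lemma key_dyadic (n : ℕ) (A : Fin n → Finset (Fin n))
    (spencer : ∀ (B : Fin n → Finset (Fin n)) (X : Finset (Fin n)),
      ∃ χ : Fin n → ℝ, (∀ j, χ j = 1 ∨ χ j = -1) ∧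
        ∀ i, |∑ j ∈ B i ∩ X, χ j| ≤ 6 * Real.sqrt n) :
    ∀ (k : ℕ) (m : Fin n → ℕ), (∀ j, m j ≤ 2 ^ k) →
      ∃ Y : Finset (Fin n), ∀ i,
        |((A i ∩ Y).card : ℝ) - ∑ j ∈ A i, (m j : ℝ) / 2 ^ k|
          ≤ 6 * Real.sqrt n * (1 - ((2 : ℝ)⁻¹) ^ k) := by
  intro k
  induction k with
  | zero =>
    intro m hm
    refine ⟨univ.filter fun j => m j = 1, fun i => ?_⟩
    have h1 : A i ∩ univ.filter (fun j => m j = 1) = (A i).filter fun j => m j = 1 := by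
      ext j; simp
    have h2 : ((A i).filter fun j => m j = 1).card = ∑ j ∈ A i, m j := by
      rw [card_filter]
      refine Finset.sum_congr rfl fun j _ => ?_
      have := hm j
      interval_cases h : m j <;> simp
    rw [h1, h2]
    push_cast
    simp
  | succ k ih =>
    intro m hm
    obtain ⟨χ, hχpm, hχ⟩ := spencer A (univ.filter fun j => Odd (m j))
    set m' : Fin n → ℕ := fun j =>
      if Odd (m j) then (if χ j = 1 then (m j + 1) / 2 else (m j - 1) / 2) else m j / 2 with hm'def
    have hmle : ∀ j, m j ≤ 2 * 2 ^ k := by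
      intro j; have := hm j; rwa [pow_succ, mul_comm] at this
    have hm' : ∀ j, m' j ≤ 2 ^ k := by
      intro j
      have h1 := hmle j
      simp only [hm'def]
      split_ifs with h h2
      · have := Nat.odd_iff.mp h; omega
      · have := Nat.odd_iff.mp h; omega
      · have := Nat.even_iff.mp (Nat.not_odd_iff_even.mp h); omega
    have hpt : ∀ j, 2 * (m' j : ℝ) = (m j : ℝ) + (if Odd (m j) then χ j else 0) := by
      intro j
      simp only [hm'def]
      split_ifs with h h2
      · obtain ⟨t, ht⟩ := h
        rw [ht, h2]
        have : (2 * t + 1 + 1) / 2 = t + 1 := by omega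
        rw [this]; push_cast; ring
      · obtain ⟨t, ht⟩ := h
        have hc : χ j = -1 := (hχpm j).resolve_left h2
        rw [ht, hc]
        have : (2 * t + 1 - 1) / 2 = t := by omega
        rw [this]; push_cast; ring
      · obtain ⟨t, ht⟩ := Nat.not_odd_iff_even.mp h
        rw [ht]
        have : (t + t) / 2 = t := by omega
        rw [this]; push_cast; ring
    obtain ⟨Y, hY⟩ := ih m' hm'
    refine ⟨Y, fun i => ?_⟩
    have hinter : A i ∩ univ.filter (fun j => Odd (m j)) = (A i).filter fun j => Odd (m j) := by
      ext j; simp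
    have e1 : ∑ j ∈ A i ∩ univ.filter (fun j => Odd (m j)), χ j
        = ∑ j ∈ A i, (if Odd (m j) then χ j else 0) := by
      rw [hinter, sum_filter]
    have e2 : (2 : ℝ) * ∑ j ∈ A i, (m' j : ℝ)
        = ∑ j ∈ A i, (m j : ℝ) + ∑ j ∈ A i ∩ univ.filter (fun j => Odd (m j)), χ j := by
      rw [e1, Finset.mul_sum, ← Finset.sum_add_distrib]
      exact Finset.sum_congr rfl fun j _ => hpt j
    have hS : ∑ j ∈ A i, (m' j : ℝ) / 2 ^ k
        = ∑ j ∈ A i, (m j : ℝ) / 2 ^ (k + 1)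
          + (∑ j ∈ A i ∩ univ.filter (fun j => Odd (m j)), χ j) / 2 ^ (k + 1) := by
      rw [← Finset.sum_div, ← Finset.sum_div, ← add_div, pow_succ,
        div_eq_div_iff (by positivity) (by positivity), ← e2]
      ring
    have hYi := hY i
    have hχi := hχ i
    have habs : |(∑ j ∈ A i ∩ univ.filter (fun j => Odd (m j)), χ j) / 2 ^ (k + 1)|
        ≤ 6 * Real.sqrt n * ((2 : ℝ)⁻¹) ^ (k + 1) := by
      rw [abs_div, abs_of_pos (by positivity : (0:ℝ) < 2 ^ (k+1)), div_le_iff₀ (by positivity)]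
      calc |∑ j ∈ A i ∩ univ.filter (fun j => Odd (m j)), χ j| ≤ 6 * Real.sqrt n := hχi
        _ = 6 * Real.sqrt n * ((2 : ℝ)⁻¹) ^ (k + 1) * 2 ^ (k + 1) := by
            rw [mul_assoc, inv_pow]
            field_simp
    have tri : |((A i ∩ Y).card : ℝ) - ∑ j ∈ A i, (m j : ℝ) / 2 ^ (k + 1)|
        ≤ |((A i ∩ Y).card : ℝ) - ∑ j ∈ A i, (m' j : ℝ) / 2 ^ k|
          + |(∑ j ∈ A i ∩ univ.filter (fun j => Odd (m j)), χ j) / 2 ^ (k + 1)| := by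
      have : ((A i ∩ Y).card : ℝ) - ∑ j ∈ A i, (m j : ℝ) / 2 ^ (k + 1)
          = (((A i ∩ Y).card : ℝ) - ∑ j ∈ A i, (m' j : ℝ) / 2 ^ k)
            + (∑ j ∈ A i ∩ univ.filter (fun j => Odd (m j)), χ j) / 2 ^ (k + 1) := by
        rw [hS]; ring
      rw [this]
      exact abs_add_le _ _
    have harith : 6 * Real.sqrt n * (1 - ((2 : ℝ)⁻¹) ^ k)
        + 6 * Real.sqrt n * ((2 : ℝ)⁻¹) ^ (k + 1)
        = 6 * Real.sqrt n * (1 - ((2 : ℝ)⁻¹) ^ (k + 1)) := by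
      rw [pow_succ]; ring
    linarith [tri, hYi, habs]

theorem stmt_6 (n : ℕ) (A : Fin n → Finset (Fin n)) (p : ℝ) (hp0 : 0 ≤ p) (hp1 : p ≤ 1)
    (spencer : ∀ (B : Fin n → Finset (Fin n)) (X : Finset (Fin n)),
      ∃ χ : Fin n → ℝ, (∀ j, χ j = 1 ∨ χ j = -1) ∧
        ∀ i, |∑ j ∈ B i ∩ X, χ j| ≤ 6 * Real.sqrt n) :
    ∃ Y : Finset (Fin n), ∀ i,
      |((A i ∩ Y).card : ℝ) - p * ((A i).card : ℝ)| ≤ 6 * Real.sqrt n := by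
  have hsq : (0:ℝ) ≤ Real.sqrt n := Real.sqrt_nonneg _
  -- for each k, apply the dyadic lemma with m j = ⌊p * 2^k⌋₊
  have hkey : ∀ k : ℕ, ∃ Y : Finset (Fin n), ∀ i,
      |((A i ∩ Y).card : ℝ) - p * ((A i).card : ℝ)| ≤ 6 * Real.sqrt n + n / 2 ^ k := by
    intro k
    have hple : p * 2 ^ k ≤ ((2 ^ k : ℕ) : ℝ) := by
      push_cast
      nlinarith [pow_pos (by norm_num : (0:ℝ) < 2) k]
    have hmle : ∀ j : Fin n, (fun _ : Fin n => ⌊p * 2 ^ k⌋₊) j ≤ 2 ^ k := by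
      intro j
      have h1 : (⌊p * 2 ^ k⌋₊ : ℝ) ≤ ((2 ^ k : ℕ) : ℝ) :=
        le_trans (Nat.floor_le (by positivity)) hple
      exact_mod_cast h1
    obtain ⟨Y, hY⟩ := key_dyadic n A spencer k (fun _ => ⌊p * 2 ^ k⌋₊) hmle
    refine ⟨Y, fun i => ?_⟩
    have hY1 : |((A i ∩ Y).card : ℝ) - ∑ j ∈ A i, (⌊p * 2 ^ k⌋₊ : ℝ) / 2 ^ k|
        ≤ 6 * Real.sqrt n := by
      refine le_trans (hY i) ?_
      have h1 : ((2 : ℝ)⁻¹) ^ k ≥ 0 := by positivity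
      nlinarith
    -- floor approximation
    have hp2 : (0:ℝ) ≤ p * 2 ^ k := by positivity
    have hfl : (⌊p * 2 ^ k⌋₊ : ℝ) ≤ p * 2 ^ k := Nat.floor_le hp2
    have hfl2 : p * 2 ^ k < (⌊p * 2 ^ k⌋₊ : ℝ) + 1 := Nat.lt_floor_add_one _
    have hsum : ∑ j ∈ A i, (⌊p * 2 ^ k⌋₊ : ℝ) / 2 ^ k
        = ((A i).card : ℝ) * ((⌊p * 2 ^ k⌋₊ : ℝ) / 2 ^ k) := by
      rw [Finset.sum_const, nsmul_eq_mul]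
    have hcard : ((A i).card : ℝ) ≤ n := by
      have := card_le_card (subset_univ (A i))
      simp only [card_univ, Fintype.card_fin] at this
      exact_mod_cast this
    have hcard0 : (0:ℝ) ≤ ((A i).card : ℝ) := by positivity
    have happrox : |∑ j ∈ A i, (⌊p * 2 ^ k⌋₊ : ℝ) / 2 ^ k - p * ((A i).card : ℝ)|
        ≤ (n : ℝ) / 2 ^ k := by
      rw [hsum]
      have hpow : (0:ℝ) < 2 ^ k := by positivity
      have hq1 : p - 1 / 2 ^ k ≤ (⌊p * 2 ^ k⌋₊ : ℝ) / 2 ^ k := by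
        rw [sub_le_iff_le_add, ← add_div, le_div_iff₀ hpow]
        linarith
      have hq2 : (⌊p * 2 ^ k⌋₊ : ℝ) / 2 ^ k ≤ p := by
        rw [div_le_iff₀ hpow]; linarith
      have hml : ((A i).card : ℝ) * (p - 1 / 2 ^ k) ≤ ((A i).card : ℝ) * ((⌊p * 2 ^ k⌋₊ : ℝ) / 2 ^ k) :=
        mul_le_mul_of_nonneg_left hq1 hcard0
      have hmu : ((A i).card : ℝ) * ((⌊p * 2 ^ k⌋₊ : ℝ) / 2 ^ k) ≤ ((A i).card : ℝ) * p :=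
        mul_le_mul_of_nonneg_left hq2 hcard0
      have hex : ((A i).card : ℝ) * (p - 1 / 2 ^ k) = ((A i).card : ℝ) * p - ((A i).card : ℝ) * (1 / 2 ^ k) := by
        ring
      have hdd : ((A i).card : ℝ) * (1 / 2 ^ k) ≤ (n : ℝ) * (1 / 2 ^ k) :=
        mul_le_mul_of_nonneg_right hcard (by positivity)
      have hnn : (n : ℝ) * (1 / 2 ^ k) = (n : ℝ) / 2 ^ k := by ring
      have hpos : (0 : ℝ) ≤ (n : ℝ) / 2 ^ k := by positivity
      rw [abs_le]
      constructor
      · linarith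
      · linarith
    calc |((A i ∩ Y).card : ℝ) - p * ((A i).card : ℝ)|
        ≤ |((A i ∩ Y).card : ℝ) - ∑ j ∈ A i, (⌊p * 2 ^ k⌋₊ : ℝ) / 2 ^ k|
          + |∑ j ∈ A i, (⌊p * 2 ^ k⌋₊ : ℝ) / 2 ^ k - p * ((A i).card : ℝ)| := by
          have : ((A i ∩ Y).card : ℝ) - p * ((A i).card : ℝ)
              = (((A i ∩ Y).card : ℝ) - ∑ j ∈ A i, (⌊p * 2 ^ k⌋₊ : ℝ) / 2 ^ k)
                + (∑ j ∈ A i, (⌊p * 2 ^ k⌋₊ : ℝ) / 2 ^ k - p * ((A i).card : ℝ)) := by ring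
          rw [this]; exact abs_add_le _ _
      _ ≤ 6 * Real.sqrt n + (n : ℝ) / 2 ^ k := add_le_add hY1 happrox
  choose f hf using hkey
  obtain ⟨Y, hY⟩ := Finite.exists_infinite_fiber f
  rw [Set.infinite_coe_iff] at hY
  refine ⟨Y, fun i => ?_⟩
  refine le_of_forall_pos_le_add fun ε hε => ?_
  obtain ⟨K, hK⟩ := exists_nat_gt ((n : ℝ) / ε)
  obtain ⟨k, hk1, hk2⟩ := hY.exists_gt K
  have hfk : f k = Y := hk1
  have hbound := hf k i
  rw [hfk] at hbound
  have h2k : (K : ℝ) < 2 ^ k := by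
    have := Nat.lt_two_pow_self (n := k)
    exact_mod_cast lt_trans (Nat.lt_of_lt_of_le hk2 (le_refl k)) this
  have hnd : (n : ℝ) / 2 ^ k < ε := by
    rw [div_lt_iff₀ (by positivity : (0:ℝ) < 2 ^ k)]
    have h1 : (n : ℝ) / ε < 2 ^ k := lt_trans hK h2k
    rw [div_lt_iff₀ hε] at h1
    linarith [mul_comm ε ((2:ℝ) ^ k)]
  linarith
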